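/- Let T > 0, K₁ > 0, B₁ > 0, 0 < α < 1, and let N ≥ 1 be a natural number. Define c_k = (−1)^k C(α,k) and S(ω) = ∑_{k=0}^{N} c_k e^{−ikωT}. Then the limit as ω → 0⁺ of (1/ω) · Im[ B₁ K₁ S(ω) / (K₁ T^α + B₁ S(ω)) ] exists and equals B₁ K₁² T^{α+1} Δ_d / (B₁ Δ_s + K₁ T^α)², where Δ_d = α · C(N−α, N−1) and Δ_s = C(N−α, N). -/

import Mathlib

open Real Complex Filter

/-- Generalized binomial coefficient `C(α, k) = α(α−1)⋯(α−k+1)/k!` for real `α`. -/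
noncomputable def genBinom (α : ℝ) (k : ℕ) : ℝ :=
  (∏ i ∈ Finset.range k, (α - i)) / (Nat.factorial k)

/-- Grünwald–Letnikov coefficient `c_k = (−1)^k C(α,k)`. -/
noncomputable def glCoef (α : ℝ) (k : ℕ) : ℝ := (-1) ^ k * genBinom α k

/-- Short-memory Grünwald–Letnikov sum `S(ω) = ∑_{k=0}^{N} c_k e^{−ikωT}`. -/
noncomputable def glSum (α T : ℝ) (N : ℕ) (ω : ℝ) : ℂ :=
  ∑ k ∈ Finset.range (N + 1),
    (glCoef α k : ℂ) * Complex.exp (-(k : ℂ) * (ω * T) * Complex.I)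

lemma glCoef_eq (α : ℝ) (k : ℕ) :
    glCoef α k = (∏ i ∈ Finset.range k, ((i : ℝ) - α)) / (Nat.factorial k) := by
  unfold glCoef genBinom
  have h : ∏ i ∈ Finset.range k, ((i : ℝ) - α)
      = ∏ i ∈ Finset.range k, (-1) * (α - (i : ℝ)) := by
    apply Finset.prod_congr rfl; intro i _; ring
  rw [h, Finset.prod_mul_distrib, Finset.prod_const, Finset.card_range]
  ring

lemma glCoef_succ_eq (α : ℝ) (n : ℕ) :
    glCoef α (n + 1) = (-α) * (∏ i ∈ Finset.range n, ((i : ℝ) + 1 - α)) /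
      (Nat.factorial (n + 1)) := by
  rw [glCoef_eq, Finset.prod_range_succ']
  push_cast
  ring

lemma genBinom_reflect (α : ℝ) (N : ℕ) :
    genBinom ((N : ℝ) - α) N = (∏ i ∈ Finset.range N, ((i : ℝ) + 1 - α)) / (Nat.factorial N) := by
  unfold genBinom
  congr 1
  rw [← Finset.prod_range_reflect]
  apply Finset.prod_congr rfl
  intro i hi
  simp only [Finset.mem_range] at hi
  have h1 : (↑(N - 1 - i) : ℝ) = (N : ℝ) - 1 - i := by
    rw [Nat.cast_sub (by omega), Nat.cast_sub (by omega)]; simp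
  rw [h1]; ring

lemma genBinom_reflect₂ (α : ℝ) (M : ℕ) :
    genBinom ((↑(M + 1) : ℝ) - α) M
      = (∏ i ∈ Finset.range M, ((i : ℝ) + 2 - α)) / (Nat.factorial M) := by
  unfold genBinom
  congr 1
  rw [← Finset.prod_range_reflect]
  apply Finset.prod_congr rfl
  intro i hi
  simp only [Finset.mem_range] at hi
  have h1 : (↑(M - 1 - i) : ℝ) = (M : ℝ) - 1 - i := by
    rw [Nat.cast_sub (by omega), Nat.cast_sub (by omega)]; simp
  rw [h1]
  push_cast
  ring

lemma sum_glCoef (α : ℝ) (N : ℕ) :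
    ∑ k ∈ Finset.range (N + 1), glCoef α k = genBinom ((N : ℝ) - α) N := by
  induction N with
  | zero => simp [glCoef, genBinom]
  | succ n ih =>
    rw [Finset.sum_range_succ, ih, genBinom_reflect, genBinom_reflect, glCoef_succ_eq,
      Finset.prod_range_succ]
    have hfac : (Nat.factorial (n+1) : ℝ) = (n+1) * Nat.factorial n := by
      rw [Nat.factorial_succ]; push_cast; ring
    have hf : (0:ℝ) < Nat.factorial n := by positivity
    rw [hfac]
    field_simp
    ring

lemma sum_k_glCoef (α : ℝ) (M : ℕ) :
    ∑ k ∈ Finset.range (M + 2), (k : ℝ) * glCoef α k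
      = -(α * genBinom ((↑(M + 1) : ℝ) - α) M) := by
  induction M with
  | zero =>
    simp [Finset.sum_range_succ, glCoef, genBinom]
  | succ n ih =>
    have h1 : ∏ i ∈ Finset.range (n+1), ((i:ℝ)+1-α)
        = (1-α) * ∏ i ∈ Finset.range n, ((i:ℝ)+2-α) := by
      rw [Finset.prod_range_succ']
      rw [show (∏ i ∈ Finset.range n, ((↑(i+1):ℝ)+1-α)) = ∏ i ∈ Finset.range n, ((i:ℝ)+2-α)
        from Finset.prod_congr rfl fun i _ => by push_cast; ring]
      push_cast; ring
    have h2 : ∏ i ∈ Finset.range (n+1), ((i:ℝ)+2-α)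
        = (∏ i ∈ Finset.range n, ((i:ℝ)+2-α)) * ((n:ℝ)+2-α) := by
      rw [Finset.prod_range_succ]
    rw [Finset.sum_range_succ, ih, genBinom_reflect₂, genBinom_reflect₂, glCoef_succ_eq, h1, h2]
    have hfac2 : (Nat.factorial (n+2) : ℝ) = (n+2) * Nat.factorial (n+1) := by
      rw [Nat.factorial_succ]; push_cast; ring
    have hfac1 : (Nat.factorial (n+1) : ℝ) = (n+1) * Nat.factorial n := by
      rw [Nat.factorial_succ]; push_cast; ring
    have hf : (0:ℝ) < Nat.factorial n := by positivity
    push_cast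
    rw [hfac2, hfac1]
    field_simp
    ring

lemma glSum_zero (α T : ℝ) (N : ℕ) :
    glSum α T N 0 = ((genBinom ((N : ℝ) - α) N : ℝ) : ℂ) := by
  unfold glSum
  rw [← sum_glCoef]
  push_cast
  apply Finset.sum_congr rfl
  intro k _
  norm_num

lemma glSum_cont (α T : ℝ) (N : ℕ) : Continuous (glSum α T N) := by
  unfold glSum
  fun_prop

lemma hasDerivAt_glSum (α T : ℝ) (N : ℕ) :
    HasDerivAt (glSum α T N)
      (∑ k ∈ Finset.range (N + 1), (glCoef α k : ℂ) * (-(k : ℂ) * T * Complex.I)) 0 := by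
  unfold glSum
  apply HasDerivAt.fun_sum
  intro k _
  have h0 : HasDerivAt (fun ω : ℝ => (ω : ℂ)) 1 0 := Complex.ofRealCLM.hasDerivAt
  have h1 : HasDerivAt (fun ω : ℝ => -(k : ℂ) * (↑ω * ↑T) * Complex.I)
      (-(k : ℂ) * ↑T * Complex.I) 0 := by
    have := ((h0.mul_const (T : ℂ)).const_mul (-(k : ℂ))).mul_const Complex.I
    rw [show -(k:ℂ) * ↑T * Complex.I = -(k : ℂ) * (1 * ↑T) * Complex.I by ring]
    exact this
  have h3 := h1.cexp.const_mul (glCoef α k : ℂ)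
  simpa using h3

lemma genBinom_pos (α : ℝ) (h1 : α < 1) (N : ℕ) : 0 < genBinom ((N : ℝ) - α) N := by
  rw [genBinom_reflect]
  apply div_pos
  · apply Finset.prod_pos
    intro i _
    have : (0:ℝ) ≤ (i:ℝ) := Nat.cast_nonneg i
    linarith
  · positivity

/-- For `T > 0`, `K₁ > 0`, `B₁ > 0`, `0 < α < 1`, and memory length `N ≥ 1`,
the effective damping `(1/ω)·Im[B₁K₁S(ω)/(K₁T^α + B₁S(ω))]` of the
discrete-time FO-SLS model tends, as `ω → 0⁺`, to
`B₁K₁²T^{α+1}Δ_d/(B₁Δ_s + K₁T^α)²`, where `Δ_d = α·C(N − α, N − 1)` and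
`Δ_s = C(N − α, N)`. -/
theorem effective_damping_low_freq_limit
    (T K₁ B₁ α : ℝ) (hT : 0 < T) (hK₁ : 0 < K₁) (hB₁ : 0 < B₁)
    (h0 : 0 < α) (h1 : α < 1) (N : ℕ) (hN : 1 ≤ N) :
    Filter.Tendsto
      (fun ω : ℝ =>
        (1 / ω) * ((B₁ : ℂ) * (K₁ : ℂ) * glSum α T N ω /
            ((K₁ : ℂ) * ((T ^ α : ℝ) : ℂ) + (B₁ : ℂ) * glSum α T N ω)).im)
      (nhdsWithin 0 (Set.Ioi 0))
      (nhds (B₁ * K₁ ^ 2 * T ^ (α + 1) * (α * genBinom ((N : ℝ) - α) (N - 1)) /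
        (B₁ * genBinom ((N : ℝ) - α) N + K₁ * T ^ α) ^ 2)) := by
  obtain ⟨M, rfl⟩ : ∃ M, N = M + 1 := ⟨N - 1, by omega⟩
  simp only [Nat.add_sub_cancel]
  set s : ℝ := genBinom ((↑(M + 1) : ℝ) - α) (M + 1) with hs
  set d : ℝ := α * genBinom ((↑(M + 1) : ℝ) - α) M with hd
  have hNm1 : M + 1 - 1 = M := rfl
  -- derivative of the imaginary part of glSum at 0
  have hDim : HasDerivAt (fun ω : ℝ => (glSum α T (M + 1) ω).im) (T * d) 0 := by
    have h := (Complex.imCLM.hasFDerivAt.comp_hasDerivAt 0 (hasDerivAt_glSum α T (M + 1)))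
    have heq : Complex.imCLM (∑ k ∈ Finset.range (M + 1 + 1),
        (glCoef α k : ℂ) * (-(k : ℂ) * T * Complex.I)) = T * d := by
      rw [map_sum]
      have : ∀ k ∈ Finset.range (M + 1 + 1),
          Complex.imCLM ((glCoef α k : ℂ) * (-(k : ℂ) * T * Complex.I))
            = -(T * ((k : ℝ) * glCoef α k)) := by
        intro k _
        simp [Complex.imCLM, Complex.mul_im, Complex.mul_re]
        ring
      rw [Finset.sum_congr rfl this]
      have hsum : ∑ x ∈ Finset.range (M + 1 + 1), -(T * ((x:ℝ) * glCoef α x))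
          = -(T * ∑ x ∈ Finset.range (M + 2), (x:ℝ) * glCoef α x) := by
        rw [Finset.mul_sum, ← Finset.sum_neg_distrib]
      rw [hsum, sum_k_glCoef, hd]; ring
    rw [heq] at h
    exact h
  -- slope limit
  have hIm0 : (glSum α T (M + 1) 0).im = 0 := by rw [glSum_zero]; simp
  have hslope : Tendsto (fun ω : ℝ => (glSum α T (M + 1) ω).im / ω)
      (nhdsWithin 0 (Set.Ioi 0)) (nhds (T * d)) := by
    have h := hasDerivAt_iff_tendsto_slope.mp hDim
    have h2 : Tendsto (slope (fun ω : ℝ => (glSum α T (M + 1) ω).im) 0)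
        (nhdsWithin 0 (Set.Ioi 0)) (nhds (T * d)) :=
      h.mono_left (nhdsWithin_mono 0 (fun x hx => ne_of_gt hx))
    apply h2.congr
    intro ω
    simp [slope, hIm0]
    rw [div_eq_inv_mul]
  -- denominator limit
  set G : ℝ := K₁ * T ^ α with hG
  have hGpos : 0 < G := by rw [hG]; positivity
  have hspos : 0 < s := genBinom_pos α h1 (M + 1)
  have hdenpos : 0 < G + B₁ * s := by positivity
  have hden : Tendsto (fun ω : ℝ =>
      Complex.normSq ((K₁ : ℂ) * ((T ^ α : ℝ) : ℂ) + (B₁ : ℂ) * glSum α T (M + 1) ω))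
      (nhdsWithin 0 (Set.Ioi 0)) (nhds ((G + B₁ * s) ^ 2)) := by
    have hc : Continuous (fun ω : ℝ =>
        Complex.normSq ((K₁ : ℂ) * ((T ^ α : ℝ) : ℂ) + (B₁ : ℂ) * glSum α T (M + 1) ω)) := by
      exact Complex.continuous_normSq.comp
        (continuous_const.add (continuous_const.mul (glSum_cont α T (M + 1))))
    have h2 := (hc.tendsto 0).mono_left (nhdsWithin_le_nhds (s := Set.Ioi 0))
    convert h2 using 2
    rw [glSum_zero]
    rw [show (K₁ : ℂ) * ((T ^ α : ℝ) : ℂ) + (B₁ : ℂ) * ((s : ℝ) : ℂ) = ((G + B₁ * s : ℝ) : ℂ) by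
      push_cast [hG]; ring]
    rw [Complex.normSq_ofReal]
    ring
  -- pointwise identity
  have key : ∀ ω : ℝ,
      (1 / ω) * ((B₁ : ℂ) * (K₁ : ℂ) * glSum α T (M + 1) ω /
          ((K₁ : ℂ) * ((T ^ α : ℝ) : ℂ) + (B₁ : ℂ) * glSum α T (M + 1) ω)).im
        = (B₁ * K₁ * G) * ((glSum α T (M + 1) ω).im / ω) /
          Complex.normSq ((K₁ : ℂ) * ((T ^ α : ℝ) : ℂ) + (B₁ : ℂ) * glSum α T (M + 1) ω) := by
    intro ω
    rw [Complex.div_im]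
    simp only [Complex.add_re, Complex.add_im, Complex.mul_re, Complex.mul_im,
      Complex.ofReal_re, Complex.ofReal_im, hG]
    ring
  -- assemble
  have hfinal : Tendsto (fun ω : ℝ =>
      (B₁ * K₁ * G) * ((glSum α T (M + 1) ω).im / ω) /
        Complex.normSq ((K₁ : ℂ) * ((T ^ α : ℝ) : ℂ) + (B₁ : ℂ) * glSum α T (M + 1) ω))
      (nhdsWithin 0 (Set.Ioi 0))
      (nhds ((B₁ * K₁ * G) * (T * d) / (G + B₁ * s) ^ 2)) :=
    ((hslope.const_mul (B₁ * K₁ * G)).div hden (by positivity))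
  have hval : (B₁ * K₁ * G) * (T * d) / (G + B₁ * s) ^ 2
      = B₁ * K₁ ^ 2 * T ^ (α + 1) * α * genBinom ((↑(M + 1) : ℝ) - α) M /
        (B₁ * s + K₁ * T ^ α) ^ 2 := by
    rw [hG, hd, Real.rpow_add hT, Real.rpow_one]
    ring
  rw [show (fun ω : ℝ =>
      (1 / ω) * ((B₁ : ℂ) * (K₁ : ℂ) * glSum α T (M + 1) ω /
          ((K₁ : ℂ) * ((T ^ α : ℝ) : ℂ) + (B₁ : ℂ) * glSum α T (M + 1) ω)).im)
    = fun ω : ℝ => (B₁ * K₁ * G) * ((glSum α T (M + 1) ω).im / ω) /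
        Complex.normSq ((K₁ : ℂ) * ((T ^ α : ℝ) : ℂ) + (B₁ : ℂ) * glSum α T (M + 1) ω)
    from funext key]
  convert hfinal using 2
  rw [hval, hG]
  ring
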